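/- arXiv:2207.09787 — 2 statements merged into one kernel-verified Lean document; each statement's English description precedes it below -/
import Mathlib

section
/- The theory T is consistent, i.e., T has a model. -/
open FirstOrder FirstOrder.Language

namespace BPPaper

/-- The function symbols of the four-sorted language `L`, implemented one-sortedly:
constants `g_T`, `r` (tree sort), `g_L`, `0` (level sort); unary functions
`pred_T`, `pred_L`, the level maps `ℓ_T`, `ℓ_A`, `ℓ_B`; binary functions
`⊓` (the meet of the tree) and `f : A × B → T`. -/
inductive TFunc : ℕ → Type
  | gT : TFunc 0
  | root : TFunc 0
  | gL : TFunc 0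
  | zero : TFunc 0
  | predT : TFunc 1
  | predL : TFunc 1
  | ellT : TFunc 1
  | ellA : TFunc 1
  | ellB : TFunc 1
  | meet : TFunc 2
  | app : TFunc 2

/-- The relation symbols of `L`: unary predicates carving out the four sorts
`A`, `B`, `T`, `L`, and the two orders `≤_T` and `≤_L`. -/
inductive TRel : ℕ → Type
  | sortA : TRel 1
  | sortB : TRel 1
  | sortT : TRel 1
  | sortL : TRel 1
  | leT : TRel 2
  | leL : TRel 2

/-- The language `L` of the paper (sorts implemented as unary predicates). -/
def tLang : Language := ⟨TFunc, TRel⟩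

/-- Raw interpretation data for an `L`-structure. -/
class TOps (M : Type*) where
  SA : M → Prop
  SB : M → Prop
  ST : M → Prop
  SL : M → Prop
  leT : M → M → Prop
  leL : M → M → Prop
  meet : M → M → M
  app : M → M → M
  predT : M → M
  predL : M → M
  lT : M → M
  lA : M → M
  lB : M → M
  gT : M
  root : M
  gL : M
  zero : M

open TOps

instance tStructure (M : Type*) [TOps M] : tLang.Structure M where
  funMap {_n} f x :=
    match f with
    | .gT => gT
    | .root => root
    | .gL => gL
    | .zero => zero
    | .predT => predT (x 0)
    | .predL => predL (x 0)
    | .ellT => lT (x 0)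
    | .ellA => lA (x 0)
    | .ellB => lB (x 0)
    | .meet => meet (x 0) (x 1)
    | .app => app (x 0) (x 1)
  RelMap {_n} r x :=
    match r with
    | .sortA => SA (x 0)
    | .sortB => SB (x 0)
    | .sortT => ST (x 0)
    | .sortL => SL (x 0)
    | .leT => leT (x 0) (x 1)
    | .leL => leL (x 0) (x 1)

/-- The theory `T` of the paper, given by its (semantically presented) axioms (i)–(viii).
The four sorts partition the universe; all function symbols take the garbage/default
values specified below outside of their intended domains. -/
class TModel (M : Type*) extends TOps M where
  -- the four sorts partition the universe, and the constants lie in the correct sorts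
  sorts_cover : ∀ x : M, SA x ∨ SB x ∨ ST x ∨ SL x
  disj_AB : ∀ x : M, ¬(SA x ∧ SB x)
  disj_AT : ∀ x : M, ¬(SA x ∧ ST x)
  disj_AL : ∀ x : M, ¬(SA x ∧ SL x)
  disj_BT : ∀ x : M, ¬(SB x ∧ ST x)
  disj_BL : ∀ x : M, ¬(SB x ∧ SL x)
  disj_TL : ∀ x : M, ¬(ST x ∧ SL x)
  gT_sort : ST (gT : M)
  root_sort : ST (root : M)
  gL_sort : SL (gL : M)
  zero_sort : SL (zero : M)
  -- (i) `(L ∖ {g_L}, ≤_L)` is a discrete linear order with least element `0`, no greatest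
  -- element, and predecessor function `pred_L`; the garbage point `g_L` is unrelated to
  -- everything and `pred_L (g_L) = g_L`.
  zero_ne_gL : (zero : M) ≠ gL
  leL_dom : ∀ x y : M, leL x y → (SL x ∧ x ≠ gL ∧ SL y ∧ y ≠ gL)
  leL_refl : ∀ x : M, SL x → x ≠ gL → leL x x
  leL_antisymm : ∀ x y : M, leL x y → leL y x → x = y
  leL_trans : ∀ x y z : M, leL x y → leL y z → leL x z
  leL_total : ∀ x y : M, SL x → x ≠ gL → SL y → y ≠ gL → leL x y ∨ leL y x
  zero_least : ∀ x : M, SL x → x ≠ gL → leL zero x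
  leL_no_max : ∀ x : M, SL x → x ≠ gL → ∃ y : M, SL y ∧ y ≠ gL ∧ leL x y ∧ y ≠ x
  predL_zero : predL (zero : M) = zero
  predL_gL : predL (gL : M) = gL
  predL_junk : ∀ x : M, ¬SL x → predL x = gL
  predL_spec : ∀ x : M, SL x → x ≠ gL → x ≠ zero →
    SL (predL x) ∧ predL x ≠ gL ∧ leL (predL x) x ∧ predL x ≠ x ∧
      ∀ y : M, leL y x → y = x ∨ leL y (predL x)
  succL_exists : ∀ x : M, SL x → x ≠ gL →
    ∃ y : M, SL y ∧ y ≠ gL ∧ y ≠ zero ∧ predL y = x ∧ y ≠ x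
  -- (ii) `(T ∖ {g_T}, ≤_T, ⊓)` is a meet-tree with root `r` and binary ramification, in
  -- which the set of predecessors of any element is a discrete linear order with
  -- predecessor function `pred_T`; the garbage point `g_T` is unrelated to everything.
  root_ne_gT : (root : M) ≠ gT
  leT_dom : ∀ x y : M, leT x y → (ST x ∧ x ≠ gT ∧ ST y ∧ y ≠ gT)
  leT_refl : ∀ x : M, ST x → x ≠ gT → leT x x
  leT_antisymm : ∀ x y : M, leT x y → leT y x → x = y
  leT_trans : ∀ x y z : M, leT x y → leT y z → leT x z
  root_least : ∀ x : M, ST x → x ≠ gT → leT root x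
  pred_linear : ∀ x y z : M, leT y x → leT z x → leT y z ∨ leT z y
  meet_spec : ∀ x y : M, ST x → x ≠ gT → ST y → y ≠ gT →
    ST (meet x y) ∧ meet x y ≠ gT ∧ leT (meet x y) x ∧ leT (meet x y) y ∧
      ∀ w : M, leT w x → leT w y → leT w (meet x y)
  meet_junk : ∀ x y : M, ¬(ST x ∧ x ≠ gT ∧ ST y ∧ y ≠ gT) → meet x y = gT
  predT_root : predT (root : M) = root
  predT_gT : predT (gT : M) = gT
  predT_junk : ∀ x : M, ¬ST x → predT x = gT
  predT_spec : ∀ x : M, ST x → x ≠ gT → x ≠ root →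
    ST (predT x) ∧ predT x ≠ gT ∧ leT (predT x) x ∧ predT x ≠ x ∧
      ∀ y : M, leT y x → y = x ∨ leT y (predT x)
  ramification : ∀ x : M, ST x → x ≠ gT →
    ∃ y z : M, y ≠ z ∧ (ST y ∧ y ≠ gT ∧ predT y = x ∧ y ≠ x) ∧
      (ST z ∧ z ≠ gT ∧ predT z = x ∧ z ≠ x) ∧
      ∀ w : M, ST w → w ≠ gT → predT w = x → w ≠ x → w = y ∨ w = z
  -- (iii) `ℓ_T` is a surjective level function `T ∖ {g_T} → L ∖ {g_L}` which, on the set of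
  -- predecessors of any fixed `t`, is an order isomorphism onto an initial segment of
  -- `L ∖ {g_L}`; moreover every element of the tree has extensions to all higher levels.
  lT_gT : lT (gT : M) = gL
  lT_junk : ∀ x : M, ¬ST x → lT x = gL
  lT_sort : ∀ x : M, ST x → x ≠ gT → SL (lT x) ∧ lT x ≠ gL
  lT_surj : ∀ c : M, SL c → c ≠ gL → ∃ x : M, ST x ∧ x ≠ gT ∧ lT x = c
  lT_mono : ∀ t y z : M, leT y t → leT z t → (leT y z ↔ leL (lT y) (lT z))
  lT_initial : ∀ t c : M, ST t → t ≠ gT → leL c (lT t) → ∃ y : M, leT y t ∧ lT y = c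
  lT_ext : ∀ t c : M, ST t → t ≠ gT → leL (lT t) c → ∃ t' : M, leT t t' ∧ lT t' = c
  -- (iv) `g_L` is not in the image of `ℓ_A` nor of `ℓ_B` (on the sorts `A`, `B`)
  lA_sort : ∀ a : M, SA a → SL (lA a) ∧ lA a ≠ gL
  lA_junk : ∀ x : M, ¬SA x → lA x = gL
  lB_sort : ∀ b : M, SB b → SL (lB b) ∧ lB b ≠ gL
  lB_junk : ∀ x : M, ¬SB x → lB x = gL
  -- (v) all fibers of `ℓ_A` and `ℓ_B` over `L ∖ {g_L}` are infinite
  fiberA_infinite : ∀ c : M, SL c → c ≠ gL → {a : M | SA a ∧ lA a = c}.Infinite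
  fiberB_infinite : ∀ c : M, SL c → c ≠ gL → {b : M | SB b ∧ lB b = c}.Infinite
  -- (vi) `f(a,b) = g_T` if and only if `ℓ_A(a) ≠ ℓ_B(b)`
  app_eq_gT_iff : ∀ a b : M, SA a → SB b → (app a b = gT ↔ lA a ≠ lB b)
  app_junk : ∀ a b : M, ¬(SA a ∧ SB b) → app a b = gT
  -- (vii) if `ℓ_A(a) = ℓ_B(b)` then `ℓ_T(f(a,b)) = ℓ_A(a)`
  app_level : ∀ a b : M, SA a → SB b → lA a = lB b →
    ST (app a b) ∧ lT (app a b) = lA a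
  -- (viii) at each level, `f` is a generic surjection
  generic_B : ∀ c : M, SL c → c ≠ gL → ∀ (n : ℕ) (t a : Fin n → M),
    (∀ i, ST (t i) ∧ t i ≠ gT ∧ lT (t i) = c) → (∀ i, SA (a i) ∧ lA (a i) = c) →
    Function.Injective a → {b : M | SB b ∧ ∀ i, app (a i) b = t i}.Infinite
  generic_A : ∀ c : M, SL c → c ≠ gL → ∀ (n : ℕ) (t b : Fin n → M),
    (∀ i, ST (t i) ∧ t i ≠ gT ∧ lT (t i) = c) → (∀ i, SB (b i) ∧ lB (b i) = c) →
    Function.Injective b → {a : M | SA a ∧ ∀ i, app a (b i) = t i}.Infinite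

/-- The theory `T`: the set of `L`-sentences true in every structure satisfying the
axioms (i)–(viii) above. -/
def tTheory : tLang.Theory := {φ : tLang.Sentence | ∀ (M : Type) [TModel M], M ⊨ φ}


/-!
STATEMENT 1: The theory `T` is consistent, i.e., `T` has a model.
-/


/-! ### A concrete model -/

/-- The carrier of our model: garbage points, levels `ℕ`, tree = finite binary strings,
and sorts `A`, `B` given by a level together with a natural-number index. -/
inductive Mdl : Type
  | mgT : Mdl
  | mgL : Mdl
  | lvl (n : ℕ) : Mdl
  | tr (s : List Bool) : Mdl
  | pa (c k : ℕ) : Mdl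
  | pb (c k : ℕ) : Mdl

namespace Mdl

/-- Longest common prefix. -/
def lcp : List Bool → List Bool → List Bool
  | x :: xs, y :: ys => if x = y then x :: lcp xs ys else []
  | _, _ => []

theorem lcp_prefix_left : ∀ s t : List Bool, lcp s t <+: s
  | [], _ => by simp [lcp]
  | _ :: _, [] => by simp [lcp]
  | x :: xs, y :: ys => by
    by_cases h : x = y
    · simpa [lcp, h] using lcp_prefix_left xs ys
    · simp [lcp, h]

theorem lcp_prefix_right : ∀ s t : List Bool, lcp s t <+: t
  | [], _ => by simp [lcp]
  | _ :: _, [] => by simp [lcp]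
  | x :: xs, y :: ys => by
    by_cases h : x = y
    · subst h; simpa [lcp] using lcp_prefix_right xs ys
    · simp [lcp, h]

theorem prefix_lcp : ∀ (w s t : List Bool), w <+: s → w <+: t → w <+: lcp s t
  | [], _, _, _, _ => by simp
  | _ :: _, [], _, hs, _ => by simp at hs
  | _ :: _, _, [], _, ht => by simp at ht
  | a :: w, x :: xs, y :: ys, hs, ht => by
    rw [List.cons_prefix_cons] at hs ht
    obtain ⟨rfl, hs⟩ := hs
    obtain ⟨rfl, ht⟩ := ht
    simpa [lcp] using prefix_lcp _ _ _ hs ht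

theorem prefix_dropLast {w s : List Bool} (h : w <+: s) (hne : w ≠ s) :
    w <+: s.dropLast := by
  have hlt : w.length < s.length := by
    rcases lt_or_eq_of_le h.length_le with h' | h'
    · exact h'
    · exact absurd (h.eq_of_length h') hne
  have hw : w = List.take w.length s := List.prefix_iff_eq_take.mp h
  have : w = List.take w.length (s.dropLast) := by
    rw [List.dropLast_eq_take, List.take_take, min_eq_left (by omega)]
    exact hw
  rw [this]; exact List.take_prefix _ _

theorem prefix_of_length_le {w z t : List Bool} (hw : w <+: t) (hz : z <+: t)
    (hlen : w.length ≤ z.length) : w <+: z := by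
  have hw' : w = List.take w.length t := List.prefix_iff_eq_take.mp hw
  have hz' : z = List.take z.length t := List.prefix_iff_eq_take.mp hz
  have : w = List.take w.length z := by
    rw [hz', List.take_take, min_eq_left hlen]; exact hw'
  rw [this]; exact List.take_prefix _ _

/-- Pad/truncate a list of booleans to length `c`. -/
def fit (c : ℕ) (l : List Bool) : List Bool := (l ++ List.replicate c false).take c

theorem fit_length (c : ℕ) (l : List Bool) : (fit c l).length = c := by
  simp [fit]

theorem fit_eq {c : ℕ} {l : List Bool} (h : l.length = c) : fit c l = l := by
  subst h; exact List.take_left (l₁ := l) (l₂ := List.replicate l.length false)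

/-- The table of a natural number: decode its second unpairing as a list of lists. -/
def tbl (x y : ℕ) : List Bool :=
  ((Encodable.decode (α := List (List Bool)) x.unpair.2).getD []).getD y []

/-- The generic bipartite function. -/
def F (k m : ℕ) : List Bool := if k ≤ m then tbl m k else tbl k m

theorem tbl_pair (u : ℕ → List Bool) (K N j : ℕ) (hj : j < K) :
    tbl (Nat.pair (N + K) (Encodable.encode ((List.range K).map u))) j = u j := by
  unfold tbl
  rw [Nat.unpair_pair, Encodable.encodek]
  simp only [Option.getD_some]
  rw [List.getD_eq_getElem?_getD, List.getElem?_map, List.getElem?_range hj]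
  rfl

theorem le_pairKN (K N j : ℕ) (hj : j < K) (e : ℕ) : j < Nat.pair (N + K) e :=
  lt_of_lt_of_le (by omega) (Nat.left_le_pair (N + K) e)

@[simp] def SA' : Mdl → Prop | .pa _ _ => True | _ => False
@[simp] def SB' : Mdl → Prop | .pb _ _ => True | _ => False
@[simp] def ST' : Mdl → Prop | .mgT => True | .tr _ => True | _ => False
@[simp] def SL' : Mdl → Prop | .mgL => True | .lvl _ => True | _ => False
@[simp] def leT' : Mdl → Mdl → Prop | .tr s, .tr t => s <+: t | _, _ => False
@[simp] def leL' : Mdl → Mdl → Prop | .lvl m, .lvl n => m ≤ n | _, _ => False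
@[simp] def meet' : Mdl → Mdl → Mdl | .tr s, .tr t => .tr (lcp s t) | _, _ => .mgT
@[simp] def app' : Mdl → Mdl → Mdl
  | .pa c k, .pb c' m => if c = c' then .tr (fit c (F k m)) else .mgT
  | _, _ => .mgT
@[simp] def predT' : Mdl → Mdl | .tr s => .tr s.dropLast | _ => .mgT
@[simp] def predL' : Mdl → Mdl | .lvl n => .lvl (n - 1) | _ => .mgL
@[simp] def lT' : Mdl → Mdl | .tr s => .lvl s.length | _ => .mgL
@[simp] def lA' : Mdl → Mdl | .pa c _ => .lvl c | _ => .mgL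
@[simp] def lB' : Mdl → Mdl | .pb c _ => .lvl c | _ => .mgL

instance MOps : TOps Mdl :=
  ⟨SA', SB', ST', SL', leT', leL', meet', app', predT', predL', lT', lA', lB',
    .mgT, .tr [], .mgL, .lvl 0⟩

@[simp] theorem SA_eq : (TOps.SA : Mdl → Prop) = SA' := rfl
@[simp] theorem SB_eq : (TOps.SB : Mdl → Prop) = SB' := rfl
@[simp] theorem ST_eq : (TOps.ST : Mdl → Prop) = ST' := rfl
@[simp] theorem SL_eq : (TOps.SL : Mdl → Prop) = SL' := rfl
@[simp] theorem leT_eq : (TOps.leT : Mdl → Mdl → Prop) = leT' := rfl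
@[simp] theorem leL_eq : (TOps.leL : Mdl → Mdl → Prop) = leL' := rfl
@[simp] theorem meet_eq : (TOps.meet : Mdl → Mdl → Mdl) = meet' := rfl
@[simp] theorem app_eq : (TOps.app : Mdl → Mdl → Mdl) = app' := rfl
@[simp] theorem predT_eq : (TOps.predT : Mdl → Mdl) = predT' := rfl
@[simp] theorem predL_eq : (TOps.predL : Mdl → Mdl) = predL' := rfl
@[simp] theorem lT_eq : (TOps.lT : Mdl → Mdl) = lT' := rfl
@[simp] theorem lA_eq : (TOps.lA : Mdl → Mdl) = lA' := rfl
@[simp] theorem lB_eq : (TOps.lB : Mdl → Mdl) = lB' := rfl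
@[simp] theorem gT_eq : (TOps.gT : Mdl) = .mgT := rfl
@[simp] theorem root_eq : (TOps.root : Mdl) = .tr [] := rfl
@[simp] theorem gL_eq : (TOps.gL : Mdl) = .mgL := rfl
@[simp] theorem zero_eq : (TOps.zero : Mdl) = .lvl 0 := rfl

open TOps

theorem ax_sorts_cover : ∀ x : Mdl, SA x ∨ SB x ∨ ST x ∨ SL x :=
  fun x => by cases x <;> simp

theorem ax_disj_AB : ∀ x : Mdl, ¬(SA x ∧ SB x) :=
  fun x => by cases x <;> simp

theorem ax_disj_AT : ∀ x : Mdl, ¬(SA x ∧ ST x) :=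
  fun x => by cases x <;> simp

theorem ax_disj_AL : ∀ x : Mdl, ¬(SA x ∧ SL x) :=
  fun x => by cases x <;> simp

theorem ax_disj_BT : ∀ x : Mdl, ¬(SB x ∧ ST x) :=
  fun x => by cases x <;> simp

theorem ax_disj_BL : ∀ x : Mdl, ¬(SB x ∧ SL x) :=
  fun x => by cases x <;> simp

theorem ax_disj_TL : ∀ x : Mdl, ¬(ST x ∧ SL x) :=
  fun x => by cases x <;> simp

theorem ax_gT_sort : ST (gT : Mdl) :=
  by simp

theorem ax_root_sort : ST (root : Mdl) :=
  by simp

theorem ax_gL_sort : SL (gL : Mdl) :=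
  by simp

theorem ax_zero_sort : SL (zero : Mdl) :=
  by simp

theorem ax_zero_ne_gL : (zero : Mdl) ≠ gL :=
  by simp

theorem ax_leL_dom : ∀ x y : Mdl, leL x y → (SL x ∧ x ≠ gL ∧ SL y ∧ y ≠ gL) :=
  fun x y h => by cases x <;> cases y <;> simp_all

theorem ax_leL_refl : ∀ x : Mdl, SL x → x ≠ gL → leL x x :=
  fun x h h' => by cases x <;> simp_all

theorem ax_leL_antisymm : ∀ x y : Mdl, leL x y → leL y x → x = y :=
  fun x y h h' => by cases x <;> cases y <;> simp_all; omega

theorem ax_leL_trans : ∀ x y z : Mdl, leL x y → leL y z → leL x z :=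
  fun x y z h h' => by cases x <;> cases y <;> cases z <;> simp_all; omega

theorem ax_leL_total : ∀ x y : Mdl, SL x → x ≠ gL → SL y → y ≠ gL → leL x y ∨ leL y x :=
  fun x y hx hx' hy hy' => by cases x <;> cases y <;> simp_all; omega

theorem ax_zero_least : ∀ x : Mdl, SL x → x ≠ gL → leL zero x :=
  fun x hx hx' => by cases x <;> simp_all

theorem ax_leL_no_max : ∀ x : Mdl, SL x → x ≠ gL → ∃ y : Mdl, SL y ∧ y ≠ gL ∧ leL x y ∧ y ≠ x :=
  fun x hx hx' => by
    cases x <;> simp_all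
    case lvl n => exact ⟨.lvl (n + 1), by simp, by simp, by simp⟩

theorem ax_predL_zero : predL (zero : Mdl) = zero :=
  by simp

theorem ax_predL_gL : predL (gL : Mdl) = gL :=
  by simp

theorem ax_predL_junk : ∀ x : Mdl, ¬SL x → predL x = gL :=
  fun x hx => by cases x <;> simp_all

theorem ax_predL_spec : ∀ x : Mdl, SL x → x ≠ gL → x ≠ zero → SL (predL x) ∧ predL x ≠ gL ∧ leL (predL x) x ∧ predL x ≠ x ∧ ∀ y : Mdl, leL y x → y = x ∨ leL y (predL x) :=
  fun x hx hx' hx0 => by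
    cases x <;> simp_all
    case lvl n =>
      refine ⟨by omega, fun y hy => ?_⟩
      cases y <;> simp_all
      omega

theorem ax_succL_exists : ∀ x : Mdl, SL x → x ≠ gL → ∃ y : Mdl, SL y ∧ y ≠ gL ∧ y ≠ zero ∧ predL y = x ∧ y ≠ x :=
  fun x hx hx' => by
    cases x <;> simp_all
    case lvl n => exact ⟨.lvl (n + 1), by simp, by simp, by simp, by simp⟩

theorem ax_root_ne_gT : (root : Mdl) ≠ gT :=
  by simp

theorem ax_leT_dom : ∀ x y : Mdl, leT x y → (ST x ∧ x ≠ gT ∧ ST y ∧ y ≠ gT) :=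
  fun x y h => by cases x <;> cases y <;> simp_all

theorem ax_leT_refl : ∀ x : Mdl, ST x → x ≠ gT → leT x x :=
  fun x h h' => by cases x <;> simp_all

theorem ax_leT_antisymm : ∀ x y : Mdl, leT x y → leT y x → x = y :=
  fun x y h h' => by
    cases x <;> cases y <;> simp_all
    case tr.tr s t => exact h.eq_of_length (le_antisymm h.length_le h'.length_le)

theorem ax_leT_trans : ∀ x y z : Mdl, leT x y → leT y z → leT x z :=
  fun x y z h h' => by
    cases x <;> cases y <;> cases z <;> simp_all
    case tr.tr.tr => exact h.trans h'

theorem ax_root_least : ∀ x : Mdl, ST x → x ≠ gT → leT root x :=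
  fun x hx hx' => by cases x <;> simp_all

theorem ax_pred_linear : ∀ x y z : Mdl, leT y x → leT z x → leT y z ∨ leT z y :=
  fun x y z h h' => by
    cases x <;> cases y <;> cases z <;> simp_all
    case tr.tr.tr => exact List.prefix_or_prefix_of_prefix h h'

theorem ax_meet_spec : ∀ x y : Mdl, ST x → x ≠ gT → ST y → y ≠ gT → ST (meet x y) ∧ meet x y ≠ gT ∧ leT (meet x y) x ∧ leT (meet x y) y ∧ ∀ w : Mdl, leT w x → leT w y → leT w (meet x y) :=
  fun x y hx hx' hy hy' => by
    cases x <;> cases y <;> simp_all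
    case tr.tr s t =>
      refine ⟨lcp_prefix_left s t, lcp_prefix_right s t, fun w hw hw' => ?_⟩
      cases w <;> simp_all
      case tr w => exact prefix_lcp w s t hw hw'

theorem ax_meet_junk : ∀ x y : Mdl, ¬(ST x ∧ x ≠ gT ∧ ST y ∧ y ≠ gT) → meet x y = gT :=
  fun x y h => by cases x <;> cases y <;> simp_all

theorem ax_predT_root : predT (root : Mdl) = root :=
  by simp

theorem ax_predT_gT : predT (gT : Mdl) = gT :=
  by simp

theorem ax_predT_junk : ∀ x : Mdl, ¬ST x → predT x = gT :=
  fun x hx => by cases x <;> simp_all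

theorem ax_predT_spec : ∀ x : Mdl, ST x → x ≠ gT → x ≠ root → ST (predT x) ∧ predT x ≠ gT ∧ leT (predT x) x ∧ predT x ≠ x ∧ ∀ y : Mdl, leT y x → y = x ∨ leT y (predT x) :=
  fun x hx hx' hroot => by
    cases x <;> simp_all
    case tr s =>
      have hs : s ≠ [] := fun h => hroot (by rw [h])
      refine ⟨List.dropLast_prefix s, ?_, fun y hy => ?_⟩
      · intro h
        have := congrArg List.length h
        simp at this
        have : s.length ≠ 0 := by simpa using hs
        omega
      · cases y <;> simp_all
        case tr w =>
          by_cases hws : w = s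
          · left; exact hws
          · right; exact prefix_dropLast hy hws

theorem ax_ramification : ∀ x : Mdl, ST x → x ≠ gT → ∃ y z : Mdl, y ≠ z ∧ (ST y ∧ y ≠ gT ∧ predT y = x ∧ y ≠ x) ∧ (ST z ∧ z ≠ gT ∧ predT z = x ∧ z ≠ x) ∧ ∀ w : Mdl, ST w → w ≠ gT → predT w = x → w ≠ x → w = y ∨ w = z :=
  fun x hx hx' => by
    cases x <;> simp_all
    case tr s =>
      refine ⟨.tr (s ++ [false]), .tr (s ++ [true]), by simp,
        ⟨by simp, by simp, by simp, by simp⟩, ⟨by simp, by simp, by simp, by simp⟩,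
        fun w hw hw' hpred hne => ?_⟩
      cases w <;> simp_all
      case tr w =>
        have hw2 : w.dropLast = s := hpred
        have hne' : w ≠ s := hne
        have hwnil : w ≠ [] := by
          rintro rfl
          exact hne' (by simpa using hw2)
        have hdec : w.dropLast ++ [w.getLast hwnil] = w := List.dropLast_append_getLast hwnil
        rw [hw2] at hdec
        cases hb : w.getLast hwnil
        · left; rw [← hdec, hb]
        · right; rw [← hdec, hb]

theorem ax_lT_gT : lT (gT : Mdl) = gL :=
  by simp

theorem ax_lT_junk : ∀ x : Mdl, ¬ST x → lT x = gL :=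
  fun x hx => by cases x <;> simp_all

theorem ax_lT_sort : ∀ x : Mdl, ST x → x ≠ gT → SL (lT x) ∧ lT x ≠ gL :=
  fun x hx hx' => by cases x <;> simp_all

theorem ax_lT_surj : ∀ c : Mdl, SL c → c ≠ gL → ∃ x : Mdl, ST x ∧ x ≠ gT ∧ lT x = c :=
  fun c hc hc' => by
    cases c <;> simp_all
    case lvl n => exact ⟨.tr (List.replicate n false), by simp, by simp, by simp⟩

theorem ax_lT_mono : ∀ t y z : Mdl, leT y t → leT z t → (leT y z ↔ leL (lT y) (lT z)) :=
  fun t y z hy hz => by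
    cases t <;> cases y <;> cases z <;> simp_all
    case tr.tr.tr t y z =>
      constructor
      · exact fun h => h.length_le
      · exact fun h => prefix_of_length_le hy hz h

theorem ax_lT_initial : ∀ t c : Mdl, ST t → t ≠ gT → leL c (lT t) → ∃ y : Mdl, leT y t ∧ lT y = c :=
  fun t c ht ht' hc => by
    cases t <;> cases c <;> simp_all
    case tr.lvl s n =>
      exact ⟨.tr (List.take n s), List.take_prefix n s, by simp; omega⟩

theorem ax_lT_ext : ∀ t c : Mdl, ST t → t ≠ gT → leL (lT t) c → ∃ t' : Mdl, leT t t' ∧ lT t' = c :=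
  fun t c ht ht' hc => by
    cases t <;> cases c <;> simp_all
    case tr.lvl s n =>
      refine ⟨.tr (s ++ List.replicate (n - s.length) false), List.prefix_append _ _, ?_⟩
      simp; omega

theorem ax_lA_sort : ∀ a : Mdl, SA a → SL (lA a) ∧ lA a ≠ gL :=
  fun a ha => by cases a <;> simp_all

theorem ax_lA_junk : ∀ x : Mdl, ¬SA x → lA x = gL :=
  fun x hx => by cases x <;> simp_all

theorem ax_lB_sort : ∀ b : Mdl, SB b → SL (lB b) ∧ lB b ≠ gL :=
  fun b hb => by cases b <;> simp_all

theorem ax_lB_junk : ∀ x : Mdl, ¬SB x → lB x = gL :=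
  fun x hx => by cases x <;> simp_all

theorem ax_fiberA_infinite : ∀ c : Mdl, SL c → c ≠ gL → {a : Mdl | SA a ∧ lA a = c}.Infinite :=
  fun c hc hc' => by
    cases c <;> simp_all
    case lvl n =>
      apply Set.infinite_of_injective_forall_mem (f := fun k : ℕ => Mdl.pa n k)
      · intro a b h; simpa using h
      · intro k; exact ⟨trivial, rfl⟩

theorem ax_fiberB_infinite : ∀ c : Mdl, SL c → c ≠ gL → {b : Mdl | SB b ∧ lB b = c}.Infinite :=
  fun c hc hc' => by
    cases c <;> simp_all
    case lvl n =>
      apply Set.infinite_of_injective_forall_mem (f := fun k : ℕ => Mdl.pb n k)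
      · intro a b h; simpa using h
      · intro k; exact ⟨trivial, rfl⟩

theorem ax_app_eq_gT_iff : ∀ a b : Mdl, SA a → SB b → (app a b = gT ↔ lA a ≠ lB b) :=
  fun a b ha hb => by
    cases a <;> cases b <;> simp_all

theorem ax_app_junk : ∀ a b : Mdl, ¬(SA a ∧ SB b) → app a b = gT :=
  fun a b h => by cases a <;> cases b <;> simp_all

theorem ax_app_level : ∀ a b : Mdl, SA a → SB b → lA a = lB b → ST (app a b) ∧ lT (app a b) = lA a :=
  fun a b ha hb hl => by
    cases a <;> cases b <;> simp_all
    case pa.pb c k c' m =>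
      subst hl
      simp [fit_length]

theorem ax_generic_B : ∀ c : Mdl, SL c → c ≠ gL → ∀ (n : ℕ) (t a : Fin n → Mdl), (∀ i, ST (t i) ∧ t i ≠ gT ∧ lT (t i) = c) → (∀ i, SA (a i) ∧ lA (a i) = c) → Function.Injective a → {b : Mdl | SB b ∧ ∀ i, app (a i) b = t i}.Infinite :=
  fun c hc hc' nn t a ht ha hinj => by
    cases c <;> simp_all
    case lvl n =>
      have hs : ∀ i, ∃ s : List Bool, t i = .tr s ∧ s.length = n := by
        intro i
        obtain ⟨h1, h2, h3⟩ := ht i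
        cases hti : t i <;> rw [hti] at h1 h2 h3 <;> simp_all
      choose s hs hslen using hs
      have hk : ∀ i, ∃ k : ℕ, a i = .pa n k := by
        intro i
        obtain ⟨h1, h2⟩ := ha i
        cases hai : a i <;> rw [hai] at h1 h2 <;> simp_all
      choose k hk using hk
      have hkinj : Function.Injective k := by
        intro i j h
        apply hinj
        rw [hk i, hk j, h]
      set K := (Finset.univ.sup k) + 1 with hK
      have hkK : ∀ i, k i < K := fun i =>
        lt_of_le_of_lt (Finset.le_sup (Finset.mem_univ i)) (by omega)
      classical
      set u : ℕ → List Bool := fun j => if h : ∃ i, k i = j then s h.choose else [] with hu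
      have hus : ∀ i, u (k i) = s i := by
        intro i
        have h : ∃ i', k i' = k i := ⟨i, rfl⟩
        have := h.choose_spec
        rw [hu]
        simp only [dif_pos h]
        rw [hkinj this]
      set e := Encodable.encode ((List.range K).map u) with he
      apply Set.infinite_of_injective_forall_mem
        (f := fun N : ℕ => Mdl.pb n (Nat.pair (N + K) e))
      · intro N N' h
        simp only [Mdl.pb.injEq] at h
        have := (Nat.pair_eq_pair.mp h.2).1
        omega
      · intro N
        refine ⟨trivial, fun i => ?_⟩
        rw [hk i, hs i]
        have hle : k i ≤ Nat.pair (N + K) e := le_of_lt (le_pairKN K N (k i) (hkK i) e)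
        show (if n = n then Mdl.tr (fit n (F (k i) (Nat.pair (N + K) e))) else .mgT) = _
        rw [if_pos rfl, F, if_pos hle, he, tbl_pair u K N (k i) (hkK i), hus i,
          fit_eq (hslen i)]

theorem ax_generic_A : ∀ c : Mdl, SL c → c ≠ gL → ∀ (n : ℕ) (t b : Fin n → Mdl), (∀ i, ST (t i) ∧ t i ≠ gT ∧ lT (t i) = c) → (∀ i, SB (b i) ∧ lB (b i) = c) → Function.Injective b → {a : Mdl | SA a ∧ ∀ i, app a (b i) = t i}.Infinite :=
  fun c hc hc' nn t b ht hb hinj => by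
    cases c <;> simp_all
    case lvl n =>
      have hs : ∀ i, ∃ s : List Bool, t i = .tr s ∧ s.length = n := by
        intro i
        obtain ⟨h1, h2, h3⟩ := ht i
        cases hti : t i <;> rw [hti] at h1 h2 h3 <;> simp_all
      choose s hs hslen using hs
      have hm : ∀ i, ∃ m : ℕ, b i = .pb n m := by
        intro i
        obtain ⟨h1, h2⟩ := hb i
        cases hbi : b i <;> rw [hbi] at h1 h2 <;> simp_all
      choose m hm using hm
      have hminj : Function.Injective m := by
        intro i j h
        apply hinj
        rw [hm i, hm j, h]
      set K := (Finset.univ.sup m) + 1 with hK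
      have hmK : ∀ i, m i < K := fun i =>
        lt_of_le_of_lt (Finset.le_sup (Finset.mem_univ i)) (by omega)
      classical
      set u : ℕ → List Bool := fun j => if h : ∃ i, m i = j then s h.choose else [] with hu
      have hus : ∀ i, u (m i) = s i := by
        intro i
        have h : ∃ i', m i' = m i := ⟨i, rfl⟩
        have := h.choose_spec
        rw [hu]
        simp only [dif_pos h]
        rw [hminj this]
      set e := Encodable.encode ((List.range K).map u) with he
      apply Set.infinite_of_injective_forall_mem
        (f := fun N : ℕ => Mdl.pa n (Nat.pair (N + K) e))
      · intro N N' h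
        simp only [Mdl.pa.injEq] at h
        have := (Nat.pair_eq_pair.mp h.2).1
        omega
      · intro N
        refine ⟨trivial, fun i => ?_⟩
        rw [hm i, hs i]
        have hlt : m i < Nat.pair (N + K) e := le_pairKN K N (m i) (hmK i) e
        show (if n = n then Mdl.tr (fit n (F (Nat.pair (N + K) e) (m i))) else .mgT) = _
        rw [if_pos rfl, F, if_neg (by omega), he, tbl_pair u K N (m i) (hmK i), hus i,
          fit_eq (hslen i)]

set_option maxHeartbeats 1000000 in
instance : TModel Mdl := {
  MOps with
  sorts_cover := ax_sorts_cover
  disj_AB := ax_disj_AB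
  disj_AT := ax_disj_AT
  disj_AL := ax_disj_AL
  disj_BT := ax_disj_BT
  disj_BL := ax_disj_BL
  disj_TL := ax_disj_TL
  gT_sort := ax_gT_sort
  root_sort := ax_root_sort
  gL_sort := ax_gL_sort
  zero_sort := ax_zero_sort
  zero_ne_gL := ax_zero_ne_gL
  leL_dom := ax_leL_dom
  leL_refl := ax_leL_refl
  leL_antisymm := ax_leL_antisymm
  leL_trans := ax_leL_trans
  leL_total := ax_leL_total
  zero_least := ax_zero_least
  leL_no_max := ax_leL_no_max
  predL_zero := ax_predL_zero
  predL_gL := ax_predL_gL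
  predL_junk := ax_predL_junk
  predL_spec := ax_predL_spec
  succL_exists := ax_succL_exists
  root_ne_gT := ax_root_ne_gT
  leT_dom := ax_leT_dom
  leT_refl := ax_leT_refl
  leT_antisymm := ax_leT_antisymm
  leT_trans := ax_leT_trans
  root_least := ax_root_least
  pred_linear := ax_pred_linear
  meet_spec := ax_meet_spec
  meet_junk := ax_meet_junk
  predT_root := ax_predT_root
  predT_gT := ax_predT_gT
  predT_junk := ax_predT_junk
  predT_spec := ax_predT_spec
  ramification := ax_ramification
  lT_gT := ax_lT_gT
  lT_junk := ax_lT_junk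
  lT_sort := ax_lT_sort
  lT_surj := ax_lT_surj
  lT_mono := ax_lT_mono
  lT_initial := ax_lT_initial
  lT_ext := ax_lT_ext
  lA_sort := ax_lA_sort
  lA_junk := ax_lA_junk
  lB_sort := ax_lB_sort
  lB_junk := ax_lB_junk
  fiberA_infinite := ax_fiberA_infinite
  fiberB_infinite := ax_fiberB_infinite
  app_eq_gT_iff := ax_app_eq_gT_iff
  app_junk := ax_app_junk
  app_level := ax_app_level
  generic_B := ax_generic_B
  generic_A := ax_generic_A
}

end Mdl

instance : Nonempty Mdl := ⟨Mdl.mgT⟩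

instance : Mdl ⊨ tTheory := ⟨fun _φ hφ => hφ Mdl⟩

/-- **The theory `T` is consistent**: it has a model. -/
theorem tTheory_isSatisfiable : tTheory.IsSatisfiable :=
  Theory.Model.isSatisfiable Mdl

end BPPaper
end

section
/- The theory T has the independence property (IP): there is an L-formula φ(v; w) and, in some model of T, tuples (a_i)_{i ∈ ℕ} and (b_S)_{S ⊆ ℕ} such that φ(a_i; b_S) holds if and only if i ∈ S. -/
open FirstOrder FirstOrder.Language

namespace BPPaper

open TOps

/-!
STATEMENT 13: The theory `T` has the independence property (IP): there is an `L`-formula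
`φ(v; w)` and, in some model of `T`, tuples `(a_i)_{i ∈ ℕ}` and `(b_S)_{S ⊆ ℕ}` such that
`φ(a_i; b_S)` holds if and only if `i ∈ S`.
-/

/-- There is a formula with the independence property witnessed in the model `M`. -/
def HasIPWitness (M : Type) [TModel M] : Prop :=
  ∃ (n m : ℕ) (φ : tLang.Formula (Fin n ⊕ Fin m)) (a : ℕ → Fin n → M)
    (b : Set ℕ → Fin m → M),
    ∀ (i : ℕ) (S : Set ℕ), φ.Realize (Sum.elim (a i) (b S)) ↔ i ∈ S

/-! ### Auxiliary construction of a concrete model with an IP pattern -/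

namespace IPAux
open Classical

/-- Elements of the `A`-sort (index `true`) and `B`-sort (index `false`). Besides base
points (indexed by `ℕ` resp. `Set ℕ`), there are "dedicated" points carrying a finite
requirement (a keyed table of values) plus a tag. -/
inductive P : Bool → Type
  | baseA : ℕ → P true
  | baseB : Set ℕ → P false
  | ded {s : Bool} (c : ℕ) (n : ℕ) (key : Fin n → P (!s)) (val : Fin n → List Bool) (tag : ℕ) :
      P s

/-- The level of a point. -/
def lvl : ∀ {s}, P s → ℕ
  | _, .baseA _ => 1
  | _, .baseB _ => 1
  | _, .ded c _ _ _ _ => c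

/-- Keyed lookup in a finite table. -/
noncomputable def kv {α : Type} {n : ℕ} (key : Fin n → α) (val : Fin n → List Bool) (x : α) :
    Option (List Bool) :=
  if h : ∃ j, key j = x then some (val h.choose) else none

theorem kv_eq {α : Type} {n : ℕ} {key : Fin n → α} {val : Fin n → List Bool} {x : α} {v : List Bool}
    (j : Fin n) (hj : key j = x) (hu : ∀ j', key j' = x → val j' = v) : kv key val x = some v := by
  have h : ∃ j, key j = x := ⟨j, hj⟩
  rw [kv, dif_pos h]
  exact congrArg some (hu _ h.choose_spec)

theorem kv_none {α : Type} {n : ℕ} {key : Fin n → α} {val : Fin n → List Bool} {x : α}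
    (h : ∀ j, key j ≠ x) : kv key val x = none := by
  rw [kv, dif_neg]; push_neg; exact h

/-- Truncate/pad a list to length `c`. -/
def fix (c : ℕ) (l : List Bool) : List Bool := l.take c ++ List.replicate (c - l.length) false

@[simp] theorem fix_length (c : ℕ) (l : List Bool) : (fix c l).length = c := by
  simp [fix]; omega

theorem fix_self {c : ℕ} {l : List Bool} (h : l.length = c) : fix c l = l := by
  subst h; simp [fix]

/-- The value of the generic function on a pair of points (of equal level). -/
noncomputable def happ (a : P true) (b : P false) : List Bool :=
  match a, b with
  | .baseA i, .baseB S => if i ∈ S then [true] else [false]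
  | a@(.baseA _), .ded c _ key val _ => fix c ((kv key val a).getD (List.replicate c false))
  | .ded c _ key val _, b =>
    match kv key val b with
    | some v => fix c v
    | none =>
      match b with
      | .baseB _ => List.replicate c false
      | .ded _ _ key' val' _ => fix c ((kv key' val' a).getD (List.replicate c false))

/-- Longest common prefix. -/
def lcp : List Bool → List Bool → List Bool
  | x :: xs, y :: ys => if x = y then x :: lcp xs ys else []
  | _, _ => []

theorem lcp_prefix_left : ∀ xs ys : List Bool, lcp xs ys <+: xs := by
  intro xs
  induction xs with
  | nil => intro ys; cases ys <;> simp [lcp]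
  | cons x xs ih =>
    intro ys
    cases ys with
    | nil => simp [lcp]
    | cons y ys =>
      by_cases h : x = y <;> simp [lcp, h, List.cons_prefix_cons]
      exact ih ys

theorem lcp_prefix_right : ∀ xs ys : List Bool, lcp xs ys <+: ys := by
  intro xs
  induction xs with
  | nil => intro ys; cases ys <;> simp [lcp]
  | cons x xs ih =>
    intro ys
    cases ys with
    | nil => simp [lcp]
    | cons y ys =>
      by_cases h : x = y <;> simp [lcp, h, List.cons_prefix_cons]
      exact ih ys

theorem prefix_lcp : ∀ (w xs ys : List Bool), w <+: xs → w <+: ys → w <+: lcp xs ys := by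
  intro w
  induction w with
  | nil => intro _ _ _ _; exact List.nil_prefix
  | cons c w ih =>
    intro xs ys hx hy
    cases xs with
    | nil => simp at hx
    | cons x xs =>
      cases ys with
      | nil => simp at hy
      | cons y ys =>
        rw [List.cons_prefix_cons] at hx hy
        obtain ⟨rfl, hx⟩ := hx
        obtain ⟨rfl, hy⟩ := hy
        simp [lcp, List.cons_prefix_cons]
        exact ih _ _ hx hy

theorem prefix_dropLast {u v : List Bool} (h : u <+: v) (hne : u ≠ v) : u <+: v.dropLast := by
  obtain ⟨s, rfl⟩ := h
  cases s with
  | nil => simp at hne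
  | cons c cs =>
    rw [List.dropLast_append_of_ne_nil (List.cons_ne_nil c cs)]
    exact List.prefix_append _ _

/-- The universe of the model: the two point sorts, the tree sort (`none` is the garbage
point `g_T`, `some l` is a node of the binary tree of finite binary sequences) and the
level sort (`none` is `g_L`, `some n` a level). -/
inductive M0 : Type
  | a : P true → M0
  | b : P false → M0
  | t : Option (List Bool) → M0
  | l : Option ℕ → M0

def SA0 (x : M0) : Prop := ∃ p, x = .a p
def SB0 (x : M0) : Prop := ∃ p, x = .b p
def ST0 (x : M0) : Prop := ∃ o, x = .t o
def SL0 (x : M0) : Prop := ∃ o, x = .l o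
def leT0 (x y : M0) : Prop := ∃ u v, x = .t (some u) ∧ y = .t (some v) ∧ u <+: v
def leL0 (x y : M0) : Prop := ∃ u v, x = .l (some u) ∧ y = .l (some v) ∧ u ≤ v

def meet0 : M0 → M0 → M0
  | .t (some u), .t (some v) => .t (some (lcp u v))
  | _, _ => .t none

def predT0 : M0 → M0
  | .t (some u) => .t (some u.dropLast)
  | _ => .t none

def predL0 : M0 → M0
  | .l (some u) => .l (some (u - 1))
  | _ => .l none

def lT0 : M0 → M0
  | .t (some u) => .l (some u.length)
  | _ => .l none

def lA0 : M0 → M0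
  | .a p => .l (some (lvl p))
  | _ => .l none

def lB0 : M0 → M0
  | .b p => .l (some (lvl p))
  | _ => .l none

noncomputable def app0 : M0 → M0 → M0
  | .a p, .b q => if lvl p = lvl q then .t (some (happ p q)) else .t none
  | _, _ => .t none

theorem happ_length {p : P true} {q : P false} (h : lvl p = lvl q) :
    (happ p q).length = lvl p := by
  cases p with
  | baseA i =>
    cases q with
    | baseB S => by_cases hi : i ∈ S <;> simp [happ, hi, lvl]
    | ded c n key val tag =>
      simp only [lvl] at h ⊢
      simp [happ, h]
  | ded c n key val tag =>
    simp only [lvl]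
    cases hkv : kv key val q with
    | some v => simp [happ, hkv]
    | none =>
      cases q with
      | baseB S => simp [happ, hkv]
      | ded c' n' key' val' tag' => simp [happ, hkv]




open Classical

noncomputable instance instOps : TOps M0 where
  SA := SA0
  SB := SB0
  ST := ST0
  SL := SL0
  leT := leT0
  leL := leL0
  meet := meet0
  app := app0
  predT := predT0
  predL := predL0
  lT := lT0
  lA := lA0
  lB := lB0
  gT := .t none
  root := .t (some [])
  gL := .l none
  zero := .l (some 0)

@[simp] theorem gT_def : (TOps.gT : M0) = .t none := rfl
@[simp] theorem root_def : (TOps.root : M0) = .t (some []) := rfl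
@[simp] theorem gL_def : (TOps.gL : M0) = .l none := rfl
@[simp] theorem zero_def : (TOps.zero : M0) = .l (some 0) := rfl
@[simp] theorem SA_def (x : M0) : TOps.SA x = SA0 x := rfl
@[simp] theorem SB_def (x : M0) : TOps.SB x = SB0 x := rfl
@[simp] theorem ST_def (x : M0) : TOps.ST x = ST0 x := rfl
@[simp] theorem SL_def (x : M0) : TOps.SL x = SL0 x := rfl
@[simp] theorem leT_def (x y : M0) : TOps.leT x y = leT0 x y := rfl
@[simp] theorem leL_def (x y : M0) : TOps.leL x y = leL0 x y := rfl
@[simp] theorem meet_def (x y : M0) : TOps.meet x y = meet0 x y := rfl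
@[simp] theorem app_def (x y : M0) : TOps.app x y = app0 x y := rfl
@[simp] theorem predT_def (x : M0) : TOps.predT x = predT0 x := rfl
@[simp] theorem predL_def (x : M0) : TOps.predL x = predL0 x := rfl
@[simp] theorem lT_def (x : M0) : TOps.lT x = lT0 x := rfl
@[simp] theorem lA_def (x : M0) : TOps.lA x = lA0 x := rfl
@[simp] theorem lB_def (x : M0) : TOps.lB x = lB0 x := rfl

noncomputable instance instModel : TModel M0 where
  sorts_cover := by
    intro x
    cases x with
    | a p => exact Or.inl ⟨_, rfl⟩
    | b p => exact Or.inr (Or.inl ⟨_, rfl⟩)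
    | t o => exact Or.inr (Or.inr (Or.inl ⟨_, rfl⟩))
    | l o => exact Or.inr (Or.inr (Or.inr ⟨_, rfl⟩))
  disj_AB := by rintro x ⟨⟨p, rfl⟩, ⟨q, hq⟩⟩; simp at hq
  disj_AT := by rintro x ⟨⟨p, rfl⟩, ⟨q, hq⟩⟩; simp at hq
  disj_AL := by rintro x ⟨⟨p, rfl⟩, ⟨q, hq⟩⟩; simp at hq
  disj_BT := by rintro x ⟨⟨p, rfl⟩, ⟨q, hq⟩⟩; simp at hq
  disj_BL := by rintro x ⟨⟨p, rfl⟩, ⟨q, hq⟩⟩; simp at hq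
  disj_TL := by rintro x ⟨⟨p, rfl⟩, ⟨q, hq⟩⟩; simp at hq
  gT_sort := ⟨_, rfl⟩
  root_sort := ⟨_, rfl⟩
  gL_sort := ⟨_, rfl⟩
  zero_sort := ⟨_, rfl⟩
  zero_ne_gL := by simp
  leL_dom := by
    rintro x y ⟨u, v, rfl, rfl, h⟩
    exact ⟨⟨_, rfl⟩, by simp, ⟨_, rfl⟩, by simp⟩
  leL_refl := by
    rintro x ⟨o, rfl⟩ hne
    cases o with
    | none => exact absurd rfl hne
    | some u => exact ⟨u, u, rfl, rfl, le_refl u⟩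
  leL_antisymm := by
    rintro x y ⟨u, v, rfl, rfl, h⟩ ⟨u', v', e1, e2, h'⟩
    simp only [M0.l.injEq, Option.some.injEq] at e1 e2
    subst e1; subst e2
    simp only [M0.l.injEq, Option.some.injEq]
    omega
  leL_trans := by
    rintro x y z ⟨u, v, rfl, rfl, h⟩ ⟨u', v', e1, e2, h'⟩
    simp only [M0.l.injEq, Option.some.injEq] at e1
    subst e2; subst e1
    exact ⟨u, v', rfl, rfl, le_trans h h'⟩
  leL_total := by
    rintro x y ⟨o, rfl⟩ hx ⟨o', rfl⟩ hy
    cases o with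
    | none => exact absurd rfl hx
    | some u =>
      cases o' with
      | none => exact absurd rfl hy
      | some v =>
        rcases le_total u v with h | h
        · exact Or.inl ⟨u, v, rfl, rfl, h⟩
        · exact Or.inr ⟨v, u, rfl, rfl, h⟩
  zero_least := by
    rintro x ⟨o, rfl⟩ hx
    cases o with
    | none => exact absurd rfl hx
    | some u => exact ⟨0, u, rfl, rfl, Nat.zero_le u⟩
  leL_no_max := by
    rintro x ⟨o, rfl⟩ hx
    cases o with
    | none => exact absurd rfl hx
    | some u =>
      exact ⟨.l (some (u + 1)), ⟨_, rfl⟩, by simp, ⟨u, u + 1, rfl, rfl, by omega⟩, by simp⟩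
  predL_zero := by simp [predL0]
  predL_gL := rfl
  predL_junk := by
    intro x hx
    cases x <;> first | rfl | exact absurd ⟨_, rfl⟩ hx
  predL_spec := by
    rintro x ⟨o, rfl⟩ hg h0
    cases o with
    | none => exact absurd rfl hg
    | some u =>
      have hu : u ≠ 0 := by rintro rfl; exact h0 rfl
      refine ⟨⟨_, rfl⟩, by simp [predL0], ⟨u - 1, u, rfl, rfl, by omega⟩,
        by simp [predL0]; omega, ?_⟩
      rintro y ⟨a', b', rfl, e, hab⟩
      simp only [M0.l.injEq, Option.some.injEq] at e
      subst e
      rcases eq_or_ne a' u with rfl | hne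
      · exact Or.inl rfl
      · exact Or.inr ⟨a', u - 1, rfl, rfl, by omega⟩
  succL_exists := by
    rintro x ⟨o, rfl⟩ hg
    cases o with
    | none => exact absurd rfl hg
    | some u =>
      exact ⟨.l (some (u + 1)), ⟨_, rfl⟩, by simp, by simp, by simp [predL0], by simp⟩
  root_ne_gT := by simp
  leT_dom := by
    rintro x y ⟨u, v, rfl, rfl, h⟩
    exact ⟨⟨_, rfl⟩, by simp, ⟨_, rfl⟩, by simp⟩
  leT_refl := by
    rintro x ⟨o, rfl⟩ hne
    cases o with
    | none => exact absurd rfl hne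
    | some u => exact ⟨u, u, rfl, rfl, List.prefix_refl u⟩
  leT_antisymm := by
    rintro x y ⟨u, v, rfl, rfl, h⟩ ⟨u', v', e1, e2, h'⟩
    simp only [M0.t.injEq, Option.some.injEq] at e1 e2
    subst e1; subst e2
    have := h.eq_of_length (le_antisymm h.length_le h'.length_le)
    simp [this]
  leT_trans := by
    rintro x y z ⟨u, v, rfl, rfl, h⟩ ⟨u', v', e1, e2, h'⟩
    simp only [M0.t.injEq, Option.some.injEq] at e1
    subst e2; subst e1
    exact ⟨u, v', rfl, rfl, h.trans h'⟩
  root_least := by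
    rintro x ⟨o, rfl⟩ hx
    cases o with
    | none => exact absurd rfl hx
    | some u => exact ⟨[], u, rfl, rfl, List.nil_prefix⟩
  pred_linear := by
    rintro x y z ⟨u, v, rfl, rfl, h1⟩ ⟨u', v', e1, e2, h2⟩
    simp only [M0.t.injEq, Option.some.injEq] at e2
    subst e1; subst e2
    rcases List.prefix_or_prefix_of_prefix h1 h2 with h | h
    · exact Or.inl ⟨u, u', rfl, rfl, h⟩
    · exact Or.inr ⟨u', u, rfl, rfl, h⟩
  meet_spec := by
    rintro x y ⟨o, rfl⟩ hx ⟨o', rfl⟩ hy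
    cases o with
    | none => exact absurd rfl hx
    | some u =>
      cases o' with
      | none => exact absurd rfl hy
      | some v =>
        refine ⟨⟨_, rfl⟩, by simp [meet0], ⟨lcp u v, u, rfl, rfl, lcp_prefix_left u v⟩,
          ⟨lcp u v, v, rfl, rfl, lcp_prefix_right u v⟩, ?_⟩
        rintro w ⟨a', b', rfl, e, hp1⟩ ⟨a'', b'', e1, e2, hp2⟩
        simp only [M0.t.injEq, Option.some.injEq] at e e1 e2
        subst e; subst e2
        rw [← e1] at hp2
        exact ⟨a', lcp u v, rfl, rfl, prefix_lcp _ _ _ hp1 hp2⟩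
  meet_junk := by
    intro x y h
    cases x with
    | t o =>
      cases y with
      | t o' =>
        cases o with
        | none => rfl
        | some u =>
          cases o' with
          | none => rfl
          | some v => exact absurd ⟨⟨_, rfl⟩, by simp, ⟨_, rfl⟩, by simp⟩ h
      | a p => cases o <;> rfl
      | b p => cases o <;> rfl
      | l o' => cases o <;> rfl
    | a p => cases y <;> rfl
    | b p => cases y <;> rfl
    | l o => cases y <;> rfl
  predT_root := rfl
  predT_gT := rfl
  predT_junk := by
    intro x hx
    cases x <;> first | rfl | exact absurd ⟨_, rfl⟩ hx
  predT_spec := by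
    rintro x ⟨o, rfl⟩ hg hr
    cases o with
    | none => exact absurd rfl hg
    | some u =>
      have hu : u ≠ [] := by rintro rfl; exact hr rfl
      refine ⟨⟨_, rfl⟩, by simp [predT0], ⟨u.dropLast, u, rfl, rfl, ?_⟩, ?_, ?_⟩
      · exact ⟨[u.getLast hu], List.dropLast_append_getLast hu⟩
      · simp only [predT_def, predT0, ne_eq, M0.t.injEq, Option.some.injEq]
        intro e
        have := congrArg List.length e
        rw [List.length_dropLast] at this
        have : u.length ≠ 0 := by simpa using hu
        omega
      · rintro y ⟨a', b', rfl, e, hp⟩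
        simp only [M0.t.injEq, Option.some.injEq] at e
        subst e
        rcases eq_or_ne a' u with rfl | hne
        · exact Or.inl rfl
        · exact Or.inr ⟨a', u.dropLast, rfl, rfl, prefix_dropLast hp hne⟩
  ramification := by
    rintro x ⟨o, rfl⟩ hg
    cases o with
    | none => exact absurd rfl hg
    | some u =>
      refine ⟨.t (some (u ++ [true])), .t (some (u ++ [false])), by simp,
        ⟨⟨_, rfl⟩, by simp, by simp [predT0], by simp⟩,
        ⟨⟨_, rfl⟩, by simp, by simp [predT0], by simp⟩, ?_⟩
      rintro w ⟨o', rfl⟩ hwg hpred hwx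
      cases o' with
      | none => exact absurd rfl hwg
      | some w' =>
        simp only [predT_def, predT0, M0.t.injEq, Option.some.injEq] at hpred
        have hw' : w' ≠ [] := by
          rintro rfl
          simp at hpred
          exact hwx (by rw [← hpred])
        have hd := List.dropLast_append_getLast hw'
        rw [hpred] at hd
        cases hgl : w'.getLast hw' with
        | true => rw [hgl] at hd; exact Or.inl (by rw [← hd])
        | false => rw [hgl] at hd; exact Or.inr (by rw [← hd])
  lT_gT := rfl
  lT_junk := by
    intro x hx
    cases x <;> first | rfl | exact absurd ⟨_, rfl⟩ hx
  lT_sort := by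
    rintro x ⟨o, rfl⟩ hg
    cases o with
    | none => exact absurd rfl hg
    | some u => exact ⟨⟨_, rfl⟩, by simp [lT_def, lT0]⟩
  lT_surj := by
    rintro c ⟨o, rfl⟩ hg
    cases o with
    | none => exact absurd rfl hg
    | some m => exact ⟨.t (some (List.replicate m false)), ⟨_, rfl⟩, by simp, by simp [lT_def, lT0]⟩
  lT_mono := by
    rintro x y z ⟨u, w, rfl, rfl, h1⟩ ⟨u', w', e1, e2, h2⟩
    simp only [M0.t.injEq, Option.some.injEq] at e2
    subst e1; subst e2
    constructor
    · rintro ⟨a', b', e1, e2, hp⟩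
      simp only [M0.t.injEq, Option.some.injEq] at e1 e2
      subst e1; subst e2
      exact ⟨u.length, u'.length, rfl, rfl, hp.length_le⟩
    · rintro ⟨a', b', e1, e2, hlen⟩
      simp only [lT_def, lT0, M0.l.injEq, Option.some.injEq] at e1 e2
      subst e1; subst e2
      rcases List.prefix_or_prefix_of_prefix h1 h2 with h | h
      · exact ⟨u, u', rfl, rfl, h⟩
      · have := h.eq_of_length (le_antisymm h.length_le hlen)
        exact ⟨u, u', rfl, rfl, this ▸ List.prefix_refl _⟩
  lT_initial := by
    rintro x c ⟨o, rfl⟩ hg hle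
    cases o with
    | none => exact absurd rfl hg
    | some u =>
      obtain ⟨a', b', rfl, e2, hab⟩ := hle
      simp only [lT_def, lT0, M0.l.injEq, Option.some.injEq] at e2
      subst e2
      refine ⟨.t (some (u.take a')), ⟨u.take a', u, rfl, rfl, List.take_prefix _ _⟩, ?_⟩
      simp only [lT_def, lT0, M0.l.injEq, Option.some.injEq, List.length_take]
      omega
  lT_ext := by
    rintro x c ⟨o, rfl⟩ hg hle
    cases o with
    | none => exact absurd rfl hg
    | some u =>
      obtain ⟨a', b', e1, rfl, hab⟩ := hle
      simp only [lT_def, lT0, M0.l.injEq, Option.some.injEq] at e1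
      subst e1
      refine ⟨.t (some (u ++ List.replicate (b' - u.length) false)),
        ⟨u, _, rfl, rfl, List.prefix_append _ _⟩, ?_⟩
      simp only [lT_def, lT0, M0.l.injEq, Option.some.injEq, List.length_append,
        List.length_replicate]
      omega
  lA_sort := by
    rintro x ⟨p, rfl⟩
    exact ⟨⟨_, rfl⟩, by simp [lA_def, lA0]⟩
  lA_junk := by
    intro x hx
    cases x <;> first | rfl | exact absurd ⟨_, rfl⟩ hx
  lB_sort := by
    rintro x ⟨p, rfl⟩
    exact ⟨⟨_, rfl⟩, by simp [lB_def, lB0]⟩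
  lB_junk := by
    intro x hx
    cases x <;> first | rfl | exact absurd ⟨_, rfl⟩ hx
  fiberA_infinite := by
    rintro c ⟨o, rfl⟩ hg
    cases o with
    | none => exact absurd rfl hg
    | some m =>
      apply Set.infinite_of_injective_forall_mem
        (f := fun k : ℕ => M0.a (P.ded m 0 Fin.elim0 Fin.elim0 k))
      · intro k k' h
        simpa using h
      · intro k
        exact ⟨⟨_, rfl⟩, rfl⟩
  fiberB_infinite := by
    rintro c ⟨o, rfl⟩ hg
    cases o with
    | none => exact absurd rfl hg
    | some m =>
      apply Set.infinite_of_injective_forall_mem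
        (f := fun k : ℕ => M0.b (P.ded m 0 Fin.elim0 Fin.elim0 k))
      · intro k k' h
        simpa using h
      · intro k
        exact ⟨⟨_, rfl⟩, rfl⟩
  app_eq_gT_iff := by
    rintro x y ⟨p, rfl⟩ ⟨q, rfl⟩
    by_cases h : lvl p = lvl q <;> simp [app_def, lA_def, lB_def, app0, lA0, lB0, h]
  app_junk := by
    intro x y h
    cases x with
    | a p =>
      cases y with
      | b q => exact absurd ⟨⟨_, rfl⟩, ⟨_, rfl⟩⟩ h
      | a q => rfl
      | t o => rfl
      | l o => rfl
    | b p => cases y <;> rfl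
    | t o => cases y <;> rfl
    | l o => cases y <;> rfl
  app_level := by
    rintro x y ⟨p, rfl⟩ ⟨q, rfl⟩ he
    simp only [lA_def, lB_def, lA0, lB0, M0.l.injEq, Option.some.injEq] at he
    refine ⟨?_, ?_⟩
    · exact ⟨some (happ p q), by simp [app_def, app0, he]⟩
    · simp [app_def, lT_def, lA_def, app0, he, lT0, lA0, happ_length he]
  generic_B := by
    rintro c ⟨o, rfl⟩ hg n t a ht ha hinj
    cases o with
    | none => exact absurd rfl hg
    | some m =>
      have hti : ∀ i, ∃ u : List Bool, t i = .t (some u) ∧ u.length = m := by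
        intro i
        obtain ⟨⟨oi, hoi⟩, hne, hlt⟩ := ht i
        cases oi with
        | none => exact absurd hoi hne
        | some ui =>
          refine ⟨ui, hoi, ?_⟩
          rw [hoi] at hlt
          simpa [lT0] using hlt
      choose u hu1 hu2 using hti
      have hai : ∀ i, ∃ p : P true, a i = .a p ∧ lvl p = m := by
        intro i
        obtain ⟨⟨p, hp⟩, hla⟩ := ha i
        refine ⟨p, hp, ?_⟩
        rw [hp] at hla
        simpa [lA0] using hla
      choose α hα1 hα2 using hai
      have hαinj : Function.Injective α := by
        intro i j h
        apply hinj
        rw [hα1 i, hα1 j, h]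
      set F : ℕ → P false := fun k => P.ded m n α u k with hF
      have hFinj : Function.Injective F := by
        intro k k' h
        simpa [hF] using h
      have hkvF : ∀ i, kv α u (α i) = some (u i) :=
        fun i => kv_eq i rfl (fun j' hj' => by rw [hαinj hj'])
      have key2 : ∀ i, ∃ Bd : Set ℕ, Bd.Finite ∧ ∀ k ∉ Bd, happ (α i) (F k) = u i := by
        intro i
        cases hp : α i with
        | baseA j0 =>
          refine ⟨∅, Set.finite_empty, fun k _ => ?_⟩
          simp only [hF, happ]
          rw [← hp, hkvF i]
          simp [Option.getD]
          exact fix_self (hu2 i)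
        | ded c' n' key' val' tag' =>
          refine ⟨F ⁻¹' (Set.range fun j => key' j), (Set.finite_range _).preimage
            hFinj.injOn, fun k hk => ?_⟩
          have hnone : kv key' val' (F k) = none := by
            apply kv_none
            intro j hj
            exact hk ⟨j, hj⟩
          simp only [hF, happ, hnone]
          rw [← hp, hkvF i]
          simp only [Option.getD_some]
          have hc' : c' = m := by rw [← hα2 i, hp]; rfl
          rw [hc']
          rw [show kv key' val' (P.ded m n α u k) = none from hnone]
          exact fix_self (hu2 i)
      choose Bd hBdF hBd using key2
      have hGood : (⋃ i, Bd i)ᶜ.Infinite :=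
        Set.Finite.infinite_compl (Set.finite_iUnion hBdF)
      have himg : ((fun k => M0.b (F k)) '' (⋃ i, Bd i)ᶜ).Infinite :=
        hGood.image (fun k _ k' _ h => hFinj (by simpa using h))
      apply Set.Infinite.mono _ himg
      rintro w ⟨k, hk, rfl⟩
      refine ⟨⟨_, rfl⟩, fun i => ?_⟩
      rw [hα1 i, hu1 i]
      have hlvl : lvl (α i) = lvl (F k) := by rw [hα2 i]; rfl
      have : happ (α i) (F k) = u i := hBd i k (fun hmem => hk (Set.mem_iUnion.2 ⟨i, hmem⟩))
      simp only [app_def, app0, if_pos hlvl, this]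
  generic_A := by
    rintro c ⟨o, rfl⟩ hg n t b ht hb hinj
    cases o with
    | none => exact absurd rfl hg
    | some m =>
      have hti : ∀ i, ∃ u : List Bool, t i = .t (some u) ∧ u.length = m := by
        intro i
        obtain ⟨⟨oi, hoi⟩, hne, hlt⟩ := ht i
        cases oi with
        | none => exact absurd hoi hne
        | some ui =>
          refine ⟨ui, hoi, ?_⟩
          rw [hoi] at hlt
          simpa [lT0] using hlt
      choose u hu1 hu2 using hti
      have hbi : ∀ i, ∃ p : P false, b i = .b p ∧ lvl p = m := by
        intro i
        obtain ⟨⟨p, hp⟩, hlb⟩ := hb i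
        refine ⟨p, hp, ?_⟩
        rw [hp] at hlb
        simpa [lB0] using hlb
      choose β hβ1 hβ2 using hbi
      have hβinj : Function.Injective β := by
        intro i j h
        apply hinj
        rw [hβ1 i, hβ1 j, h]
      set F : ℕ → P true := fun k => P.ded m n β u k with hF
      have hkvF : ∀ i, kv β u (β i) = some (u i) :=
        fun i => kv_eq i rfl (fun j' hj' => by rw [hβinj hj'])
      apply Set.infinite_of_injective_forall_mem (f := fun k : ℕ => M0.a (F k))
      · intro k k' h
        simpa [hF] using h
      · intro k
        refine ⟨⟨_, rfl⟩, fun i => ?_⟩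
        rw [hβ1 i, hu1 i]
        have hlvl : lvl (F k) = lvl (β i) := by rw [hβ2 i]; rfl
        have : happ (F k) (β i) = u i := by
          simp only [hF, happ, hkvF i]
          exact fix_self (hu2 i)
        simp only [app_def, app0, if_pos hlvl, this]

end IPAux


theorem funMap_app_eq (x : Fin 2 → IPAux.M0) :
    Structure.funMap (L := tLang) TFunc.app x = IPAux.app0 (x 0) (x 1) := rfl

/-- **`T` has the independence property.** -/
theorem tTheory_has_IP : ∃ (M : Type) (inst : TModel M), @HasIPWitness M inst := by
  classical
  refine ⟨IPAux.M0, inferInstance, 1, 2,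
    Term.equal (Term.func TFunc.app ![Term.var (Sum.inl 0), Term.var (Sum.inr 0)])
      (Term.func TFunc.app ![Term.var (Sum.inl 0), Term.var (Sum.inr 1)]),
    fun i _ => IPAux.M0.a (IPAux.P.baseA i),
    fun S => ![IPAux.M0.b (IPAux.P.baseB S), IPAux.M0.b (IPAux.P.baseB Set.univ)], ?_⟩
  intro i S
  rw [Formula.realize_equal]
  simp only [Term.realize_func, Term.realize_var, funMap_app_eq, Matrix.cons_val_zero,
    Matrix.cons_val_one, Matrix.head_cons, Sum.elim_inl, Sum.elim_inr]
  have h1 : IPAux.app0 (.a (.baseA i)) (.b (.baseB S)) =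
      .t (some (if i ∈ S then [true] else [false])) := by
    simp [IPAux.app0, IPAux.happ, IPAux.lvl]
  have h2 : IPAux.app0 (.a (.baseA i)) (.b (.baseB Set.univ)) = .t (some [true]) := by
    simp [IPAux.app0, IPAux.happ, IPAux.lvl]
  change IPAux.app0 (.a (.baseA i)) (.b (.baseB S)) =
    IPAux.app0 (.a (.baseA i)) (.b (.baseB Set.univ)) ↔ i ∈ S
  rw [h1, h2]
  by_cases hi : i ∈ S
  · simp [hi]
  · simp [hi]

end BPPaper
end
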